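/- For every graph G and every family F of cliques and integer p with 1 ≤ p < |F|, the clique family inequality (p−r)·Σ_{i∈W} x_i + (p−r−1)·Σ_{i∈W_o} x_i ≤ (p−r)·⌊n/p⌋ is valid for STAB(G), where n = |F|, r = n mod p, r ≥ 1, W is the set of vertices in at least p cliques of F, and W_o the set of vertices in exactly p−1 cliques of F. -/

import Mathlib

open Finset

variable {V : Type*}

def IsStableSet (G : SimpleGraph V) (S : Set V) : Prop :=
  S.Pairwise (fun a b => ¬ G.Adj a b)

def ClawFree (G : SimpleGraph V) : Prop :=
  ¬ ∃ x a b c : V, G.Adj x a ∧ G.Adj x b ∧ G.Adj x c ∧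
    a ≠ b ∧ a ≠ c ∧ b ≠ c ∧ ¬ G.Adj a b ∧ ¬ G.Adj a c ∧ ¬ G.Adj b c

noncomputable def stabilityNumber (G : SimpleGraph V) [Fintype V] : ℕ :=
  sSup {n | ∃ S : Finset V, IsStableSet G ↑S ∧ S.card = n}

def STAB (G : SimpleGraph V) [Fintype V] [DecidableEq V] : Set (V → ℝ) :=
  convexHull ℝ {x | ∃ S : Finset V, IsStableSet G ↑S ∧ x = fun i => if i ∈ S then (1:ℝ) else 0}

def ESTAB (G : SimpleGraph V) : Set (V → ℝ) :=
  {x | (∀ i, 0 ≤ x i ∧ x i ≤ 1) ∧ ∀ i j, G.Adj i j → x i + x j ≤ 1}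

def coneSet (K : Set (V → ℝ)) : Set (ℝ × (V → ℝ)) :=
  {p | ∃ (t : ℝ) (y : V → ℝ), 0 ≤ t ∧ y ∈ K ∧ p = (t, t • y)}

def Mplus (K : Set (V → ℝ)) [Fintype V] [DecidableEq V] :
    Set (Matrix (Option V) (Option V) ℝ) :=
  {Y | Y.PosSemidef ∧ (∀ i, Y i none = Y i i) ∧
    (∀ i : V, (Y none (some i), fun j => Y (some j) (some i)) ∈ coneSet K) ∧
    (∀ i : V, (Y none none - Y none (some i),
        fun j => Y (some j) none - Y (some j) (some i)) ∈ coneSet K)}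

def LSplus (K : Set (V → ℝ)) [Fintype V] [DecidableEq V] : Set (V → ℝ) :=
  {x | ∃ Y ∈ Mplus K, Y none none = 1 ∧ ∀ i, Y (some i) none = x i}

def cycleG (n : ℕ) : SimpleGraph (ZMod n) :=
  SimpleGraph.fromRel (fun a b => b = a + 1)

/-- validity of the clique family inequality (F, p) for STAB(G). -/
theorem stmt9 {V : Type*} [Fintype V] [DecidableEq V] (G : SimpleGraph V)
    (F : Finset (Finset V)) (hF : ∀ C ∈ F, G.IsClique (C : Set V))
    (p : ℕ) (hp1 : 1 ≤ p) (hpn : p < F.card) (hr : 1 ≤ F.card % p) :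
    ∀ x ∈ STAB G,
      ((p : ℝ) - (F.card % p : ℕ)) *
          ∑ i ∈ Finset.univ.filter (fun v => p ≤ (F.filter (fun C => v ∈ C)).card), x i
        + (((p : ℝ) - (F.card % p : ℕ)) - 1) *
          ∑ i ∈ Finset.univ.filter (fun v => (F.filter (fun C => v ∈ C)).card = p - 1), x i
        ≤ ((p : ℝ) - (F.card % p : ℕ)) * ((F.card / p : ℕ) : ℝ) := by
  classical
  intro x hx
  set d : V → ℕ := fun v => (F.filter (fun C => v ∈ C)).card with hd
  set W : Finset V := Finset.univ.filter (fun v => p ≤ d v) with hW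
  set Wo : Finset V := Finset.univ.filter (fun v => d v = p - 1) with hWo
  set c1 : ℝ := (p : ℝ) - (F.card % p : ℕ) with hc1
  set RHS : ℝ := c1 * ((F.card / p : ℕ) : ℝ) with hRHS
  have hlin : IsLinearMap ℝ (fun y : V → ℝ =>
      c1 * ∑ i ∈ W, y i + (c1 - 1) * ∑ i ∈ Wo, y i) := by
    constructor
    · intro y z
      simp only [Pi.add_apply, Finset.sum_add_distrib]
      ring
    · intro t y
      simp only [Pi.smul_apply, smul_eq_mul, ← Finset.mul_sum]
      ring
  have hconv : Convex ℝ {y : V → ℝ |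
      c1 * ∑ i ∈ W, y i + (c1 - 1) * ∑ i ∈ Wo, y i ≤ RHS} :=
    convex_halfSpace_le hlin RHS
  have hgen : {y : V → ℝ | ∃ S : Finset V, IsStableSet G ↑S ∧
      y = fun i => if i ∈ S then (1:ℝ) else 0} ⊆
      {y : V → ℝ | c1 * ∑ i ∈ W, y i + (c1 - 1) * ∑ i ∈ Wo, y i ≤ RHS} := by
    rintro y ⟨S, hS, rfl⟩
    simp only [Set.mem_setOf_eq]
    have hsumW : ∑ i ∈ W, (if i ∈ S then (1:ℝ) else 0) = ((W ∩ S).card : ℝ) := by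
      rw [Finset.sum_boole, Finset.filter_mem_eq_inter]
    have hsumWo : ∑ i ∈ Wo, (if i ∈ S then (1:ℝ) else 0) = ((Wo ∩ S).card : ℝ) := by
      rw [Finset.sum_boole, Finset.filter_mem_eq_inter]
    rw [hsumW, hsumWo]
    set a : ℕ := (W ∩ S).card with ha
    set b : ℕ := (Wo ∩ S).card with hb
    -- double counting: total degree of S is at most |F|
    have hcount : ∑ v ∈ S, d v ≤ F.card := by
      have h1 : ∑ v ∈ S, d v = ∑ C ∈ F, (S.filter (fun v => v ∈ C)).card := by
        simp only [hd, Finset.card_filter]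
        rw [Finset.sum_comm]
      rw [h1]
      calc ∑ C ∈ F, (S.filter (fun v => v ∈ C)).card ≤ ∑ C ∈ F, 1 := by
            apply Finset.sum_le_sum
            intro C hC
            rw [Finset.card_le_one]
            intro u hu v hv
            simp only [Finset.mem_filter] at hu hv
            by_contra hne
            exact hS hu.1 hv.1 hne ((hF C hC) hu.2 hv.2 hne)
        _ = F.card := by simp
    -- lower bound the total degree
    have hdisj : Disjoint (W ∩ S) (Wo ∩ S) := by
      rw [Finset.disjoint_left]
      intro v hv hv'
      simp only [hW, hWo, Finset.mem_inter, Finset.mem_filter] at hv hv'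
      omega
    have hsub : (W ∩ S) ∪ (Wo ∩ S) ⊆ S := by
      intro v hv
      rcases Finset.mem_union.mp hv with h | h
      · exact (Finset.mem_inter.mp h).2
      · exact (Finset.mem_inter.mp h).2
    have hlb : p * a + (p - 1) * b ≤ ∑ v ∈ S, d v := by
      have h2 : ∑ v ∈ (W ∩ S) ∪ (Wo ∩ S), d v ≤ ∑ v ∈ S, d v :=
        Finset.sum_le_sum_of_subset hsub
      rw [Finset.sum_union hdisj] at h2
      have h3 : p * a ≤ ∑ v ∈ W ∩ S, d v := by
        rw [mul_comm]
        have := Finset.card_nsmul_le_sum (W ∩ S) d p (by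
          intro v hv
          simp only [hW, Finset.mem_inter, Finset.mem_filter] at hv
          exact hv.1.2)
        simpa [smul_eq_mul] using this
      have h4 : (p - 1) * b = ∑ v ∈ Wo ∩ S, d v := by
        rw [Finset.sum_congr rfl (fun v hv => by
          simp only [hWo, Finset.mem_inter, Finset.mem_filter] at hv
          exact hv.1.2)]
        simp [mul_comm]
        exact Or.inl hb
      omega
    -- arithmetic
    have hmod : F.card % p < p := Nat.mod_lt _ (by omega)
    have hkey : p * a + (p - 1) * b ≤ p * (F.card / p) + F.card % p := by
      have := Nat.div_add_mod F.card p
      omega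
    set r : ℕ := F.card % p with hrr
    set q : ℕ := F.card / p with hq
    have hcast : ((p : ℝ)) * a + ((p : ℝ) - 1) * b ≤ (p : ℝ) * q + r := by
      have h1 : ((p * a + (p-1) * b : ℕ) : ℝ) ≤ ((p * q + r : ℕ) : ℝ) := by
        exact_mod_cast hkey
      push_cast [Nat.cast_sub hp1] at h1
      linarith
    have hr1 : (1 : ℝ) ≤ (r : ℕ) := by exact_mod_cast hr
    have hrp : ((r : ℕ) : ℝ) + 1 ≤ (p : ℝ) := by exact_mod_cast hmod
    have ha0 : (0 : ℝ) ≤ a := Nat.cast_nonneg a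
    have hb0 : (0 : ℝ) ≤ b := Nat.cast_nonneg b
    rw [hRHS, hc1]
    rcases le_or_gt (a + b) q with hcase | hcase
    · have hab : (a : ℝ) + b ≤ q := by exact_mod_cast hcase
      nlinarith [mul_le_mul_of_nonneg_left hab (by linarith : (0:ℝ) ≤ (p : ℝ) - r)]
    · have hab : (q : ℝ) + 1 ≤ (a : ℝ) + b := by
        have : q + 1 ≤ a + b := hcase
        exact_mod_cast this
      nlinarith [mul_nonneg (by linarith : (0:ℝ) ≤ ((r:ℕ) : ℝ)) (by linarith : (0:ℝ) ≤ (a:ℝ) + b - q - 1)]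
  exact convexHull_min hgen hconv hx
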